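/- Every two-qubit unitary maps some separable state to a separable state: for every G ∈ Matrix.unitaryGroup (Fin 2 × Fin 2) ℂ there exists a unit vector φ : Fin 2 × Fin 2 → ℂ with ε(φ) = 0 and ε(G.mulVec φ) = 0. -/

import Mathlib

open Matrix Kronecker

noncomputable section

def σy : Matrix (Fin 2) (Fin 2) ℂ := !![0, -Complex.I; Complex.I, 0]

def eps (φ : Fin 2 × Fin 2 → ℂ) : ℂ := φ ⬝ᵥ ((σy ⊗ₖ σy).mulVec φ)

def CNOT : Matrix (Fin 2 × Fin 2) (Fin 2 × Fin 2) ℂ :=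
  Matrix.of fun p q => if p.1 = q.1 ∧ p.2 = q.1 + q.2 then 1 else 0

def e (i j : Fin 2) : Fin 2 × Fin 2 → ℂ := Pi.single (i, j) 1

def e₀ : Fin 2 × Fin 2 → ℂ := e 0 0

def Rz (θ : ℝ) : Matrix (Fin 2) (Fin 2) ℂ :=
  !![Complex.exp (Complex.I * θ / 2), 0; 0, Complex.exp (-Complex.I * θ / 2)]

def Rx (θ : ℝ) : Matrix (Fin 2) (Fin 2) ℂ :=
  !![(Real.cos (θ / 2) : ℂ), Complex.I * Real.sin (θ / 2);
     Complex.I * Real.sin (θ / 2), (Real.cos (θ / 2) : ℂ)]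

lemma single_quad (M : Matrix (Fin 2 × Fin 2) (Fin 2 × Fin 2) ℂ) (a b : Fin 2 × Fin 2) :
    (Pi.single a 1 : Fin 2 × Fin 2 → ℂ) ⬝ᵥ M.mulVec (Pi.single b 1) = M a b := by
  simp [dotProduct, mulVec, Pi.single_apply]

lemma quad_expand (M : Matrix (Fin 2 × Fin 2) (Fin 2 × Fin 2) ℂ)
    (u v : Fin 2 × Fin 2 → ℂ) (x y : ℂ) :
    (x • u + y • v) ⬝ᵥ M.mulVec (x • u + y • v)
      = x * x * (u ⬝ᵥ M.mulVec u)
      + x * y * (u ⬝ᵥ M.mulVec v + v ⬝ᵥ M.mulVec u)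
      + y * y * (v ⬝ᵥ M.mulVec v) := by
  simp [mulVec_add, mulVec_smul, add_dotProduct, dotProduct_add,
    smul_dotProduct, dotProduct_smul, smul_smul]
  ring

theorem maps_some_separable_to_separable
    (G : Matrix (Fin 2 × Fin 2) (Fin 2 × Fin 2) ℂ)
    (hG : G ∈ Matrix.unitaryGroup (Fin 2 × Fin 2) ℂ) :
    ∃ φ : Fin 2 × Fin 2 → ℂ, (∑ p, ‖φ p‖ ^ 2 = 1) ∧ eps φ = 0 ∧
      eps (G.mulVec φ) = 0 := by
  classical
  set M : Matrix (Fin 2 × Fin 2) (Fin 2 × Fin 2) ℂ := σy ⊗ₖ σy with hM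
  set u : Fin 2 × Fin 2 → ℂ := G.mulVec (e 0 0) with hu
  set v : Fin 2 × Fin 2 → ℂ := G.mulVec (e 1 0) with hv
  set A : ℂ := u ⬝ᵥ M.mulVec u with hA'
  set B : ℂ := u ⬝ᵥ M.mulVec v + v ⬝ᵥ M.mulVec u with hB'
  set C : ℂ := v ⬝ᵥ M.mulVec v with hC'
  obtain ⟨x, y, hxy, hroot⟩ :
      ∃ x y : ℂ, ¬(x = 0 ∧ y = 0) ∧ A * (x * x) + B * (x * y) + C * (y * y) = 0 := by
    by_cases hA : A = 0
    · exact ⟨1, 0, by simp, by simp [hA]⟩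
    · obtain ⟨s, hs⟩ := IsAlgClosed.exists_pow_nat_eq (k := ℂ) (discrim A B C) (n := 2) (by norm_num)
      refine ⟨(-B + s) / (2 * A), 1, by simp, ?_⟩
      have h := (quadratic_eq_zero_iff hA (by rw [← hs]; ring) ((-B + s) / (2 * A))).mpr
        (Or.inl rfl)
      linear_combination h
  set φ0 : Fin 2 × Fin 2 → ℂ := x • e 0 0 + y • e 1 0 with hφ0
  have hGφ0 : G.mulVec φ0 = x • u + y • v := by
    simp [hφ0, mulVec_add, mulVec_smul, hu, hv]
  have heps0 : eps φ0 = 0 := by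
    rw [eps, ← hM, hφ0, quad_expand]
    simp only [e, single_quad]
    simp [hM, σy, Matrix.kroneckerMap_apply]
  have hepsG : eps (G.mulVec φ0) = 0 := by
    rw [eps, ← hM, hGφ0, quad_expand, ← hA', ← hB', ← hC']
    linear_combination hroot
  -- normalize
  have hsum0 : ∑ p, ‖φ0 p‖ ^ 2 = ‖x‖ ^ 2 + ‖y‖ ^ 2 := by
    simp [hφ0, e, Fintype.sum_prod_type, Fin.sum_univ_two, Pi.single_apply]
  have hpos : (0 : ℝ) < ‖x‖ ^ 2 + ‖y‖ ^ 2 := by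
    rcases not_and_or.mp hxy with h | h
    · have : 0 < ‖x‖ ^ 2 := pow_pos (norm_pos_iff.mpr h) 2
      nlinarith [sq_nonneg ‖y‖]
    · have : 0 < ‖y‖ ^ 2 := pow_pos (norm_pos_iff.mpr h) 2
      nlinarith [sq_nonneg ‖x‖]
  set n : ℝ := Real.sqrt (‖x‖ ^ 2 + ‖y‖ ^ 2) with hn
  have hnpos : 0 < n := Real.sqrt_pos.mpr hpos
  have hn2 : n ^ 2 = ‖x‖ ^ 2 + ‖y‖ ^ 2 := Real.sq_sqrt hpos.le
  refine ⟨((n : ℂ)⁻¹) • φ0, ?_, ?_, ?_⟩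
  · have : ∀ p, ‖(((n : ℂ)⁻¹) • φ0) p‖ ^ 2 = (n⁻¹) ^ 2 * ‖φ0 p‖ ^ 2 := by
      intro p
      simp [norm_smul, mul_pow]
    rw [Finset.sum_congr rfl fun p _ => this p, ← Finset.mul_sum, hsum0, ← hn2]
    field_simp
  · have : eps (((n : ℂ)⁻¹) • φ0) = ((n : ℂ)⁻¹) ^ 2 * eps φ0 := by
      rw [eps, eps]
      simp [mulVec_smul, smul_dotProduct, dotProduct_smul, smul_smul]
      ring
    rw [this, heps0, mul_zero]
  · have h1 : G.mulVec (((n : ℂ)⁻¹) • φ0) = ((n : ℂ)⁻¹) • G.mulVec φ0 := by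
      simp [mulVec_smul]
    rw [h1]
    have : eps (((n : ℂ)⁻¹) • G.mulVec φ0) = ((n : ℂ)⁻¹) ^ 2 * eps (G.mulVec φ0) := by
      rw [eps, eps]
      simp [mulVec_smul, smul_dotProduct, dotProduct_smul, smul_smul]
      ring
    rw [this, hepsG, mul_zero]
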